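/- There is a universal constant C > 0 such that for every even d ∈ ℕ with d ≥ 16, every m ∈ ℕ, and every ε ∈ (0, 1/16), the minimax risk over distributions supported on {1,...,d} satisfies inf_{μ̄} sup_{μ ∈ Δ_d} P_{X ~ μ^m}(‖μ̄(X) − μ‖_TV > ε) ≥ (1/2)·(1 − C·m·ε²/d), where the infimum is over all estimators μ̄ : [d]^m → Δ_d. -/

import Mathlib

open scoped BigOperators

/-- The empirical measure induced by a sample `x` of size `m`:
`μ̂_m(i) = (1/m) ∑_t 1{x_t = i}`. -/
noncomputable def empMeas (m : ℕ) (x : Fin m → ℕ) (i : ℕ) : ℝ :=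
  ((Finset.univ.filter (fun t => x t = i)).card : ℝ) / m

/-- Total variation distance `(1/2) ∑_i |μ(i) - ν(i)|`. -/
noncomputable def tvDist (μ ν : ℕ → ℝ) : ℝ := (1 / 2) * ∑' i, |μ i - ν i|

/-- `Φ_m(ν) = (1/√m) ∑_j √(ν j)`. -/
noncomputable def Phi (m : ℕ) (ν : ℕ → ℝ) : ℝ :=
  (1 / Real.sqrt m) * ∑' j, Real.sqrt (ν j)

/-- `μ` is a probability distribution on ℕ. -/
def IsProb (μ : ℕ → ℝ) : Prop := (∀ i, 0 ≤ μ i) ∧ ∑' i, μ i = 1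

/-- Probability of the event `A` under the i.i.d. product `μ^m`. -/
noncomputable def probOf (μ : ℕ → ℝ) (m : ℕ) (A : Set (Fin m → ℕ)) : ℝ :=
  ∑' x : Fin m → ℕ, Set.indicator A (fun y => ∏ t, μ (y t)) x

/-- Expectation of `f` under the i.i.d. product `μ^m`. -/
noncomputable def expect (μ : ℕ → ℝ) (m : ℕ) (f : (Fin m → ℕ) → ℝ) : ℝ :=
  ∑' x : Fin m → ℕ, (∏ t, μ (x t)) * f x

/-- Empirical Rademacher complexity of the class of all boolean functions on ℕ,
conditional on the sample `x`:
`R̂_m(x) = E_σ [ sup_{f : ℕ → {0,1}} (1/m) ∑_t σ_t f(x_t) ]`,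
with `σ` uniform on `{-1,1}^m`. -/
noncomputable def empRad (m : ℕ) (x : Fin m → ℕ) : ℝ :=
  (1 / 2 ^ m) * ∑ σ : Fin m → Bool,
    sSup (Set.range (fun f : ℕ → Bool =>
      (1 / (m : ℝ)) * ∑ t, (if σ t then (1 : ℝ) else -1) * (if f (x t) then (1 : ℝ) else 0)))

/-- `Λ_m(μ) = ∑_{j : μ(j) < 1/m} μ(j) + (1/(2√m)) ∑_{j : μ(j) ≥ 1/m} √(μ(j))`. -/
noncomputable def Lam (m : ℕ) (μ : ℕ → ℝ) : ℝ :=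
  (∑' j, Set.indicator {j | μ j < 1 / (m : ℝ)} μ j)
    + (1 / (2 * Real.sqrt m)) *
      ∑' j, Set.indicator {j | 1 / (m : ℝ) ≤ μ j} (fun j => Real.sqrt (μ j)) j

/-- The half-norm `‖ν‖_{1/2} = (∑_i √(ν i))²`. -/
noncomputable def hfnrm (ν : ℕ → ℝ) : ℝ := (∑' i, Real.sqrt (ν i)) ^ 2

/-- `T_μ(η)` with respect to a non-increasing rearrangement `π` of `μ`:
the least `t` such that the tail mass beyond the `t` largest atoms is `< η`
(ranks are 0-indexed). -/
noncomputable def truncT (μ : ℕ → ℝ) (π : ℕ ≃ ℕ) (η : ℝ) : ℕ :=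
  sInf {t : ℕ | ∑' i, μ (π (i + t)) < η}

/-- The truncation `μ[η]`: keep only the `T_μ(η)` largest atoms of `μ`
(as ranked by the non-increasing rearrangement `π`). -/
noncomputable def trunc (μ : ℕ → ℝ) (π : ℕ ≃ ℕ) (η : ℝ) (i : ℕ) : ℝ :=
  Set.indicator {i | π.symm i < truncT μ π η} μ i

/-- `μ` is a probability distribution supported on the first `d` naturals. -/
def IsProbOn (d : ℕ) (μ : ℕ → ℝ) : Prop := IsProb μ ∧ ∀ i, d ≤ i → μ i = 0


set_option maxHeartbeats 1000000

section MinimaxAux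
open Finset
namespace MXA

noncomputable def pd (d : ℕ) (g : ℕ → ℝ) (i : ℕ) : ℝ :=
  if i < d then (1 + (if i % 2 = 0 then g (i / 2) else - g (i / 2))) / d else 0

lemma pd_even {d n : ℕ} (hd : d = 2 * n) (g : ℕ → ℝ) {j : ℕ} (hj : j < n) :
    pd d g (2 * j) = (1 + g j) / d := by
  have h1 : 2 * j < d := by omega
  have h2 : (2 * j) % 2 = 0 := by omega
  have h3 : (2 * j) / 2 = j := by omega
  simp [pd, h1, h2, h3]

lemma pd_odd {d n : ℕ} (hd : d = 2 * n) (g : ℕ → ℝ) {j : ℕ} (hj : j < n) :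
    pd d g (2 * j + 1) = (1 - g j) / d := by
  have h1 : 2 * j + 1 < d := by omega
  have h2 : (2 * j + 1) % 2 = 1 := by omega
  have h3 : (2 * j + 1) / 2 = j := by omega
  simp [pd, h1, h2, h3]
  ring

lemma sum_range_pair (n : ℕ) (h : ℕ → ℝ) :
    ∑ i ∈ range (2 * n), h i = ∑ j ∈ range n, (h (2 * j) + h (2 * j + 1)) := by
  induction n with
  | zero => simp
  | succ k ih =>
      have h2 : 2 * (k + 1) = (2 * k) + 1 + 1 := by ring
      rw [h2, Finset.sum_range_succ, Finset.sum_range_succ, ih, Finset.sum_range_succ]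
      ring

lemma pd_congr {d : ℕ} {g g' : ℕ → ℝ} {i : ℕ} (h : g (i / 2) = g' (i / 2)) :
    pd d g i = pd d g' i := by
  unfold pd
  rw [h]

lemma sum_sq_pd {d n : ℕ} (hd : d = 2 * n) (hn : 0 < n) {g : ℕ → ℝ} {v : ℝ}
    (hg : ∀ j, j < n → (g j)^2 = v) : ∑ a ∈ range d, (pd d g a)^2 = (1+v)/d := by
  subst hd
  have hdR : (0:ℝ) < ((2*n:ℕ):ℝ) := by
    have : 0 < 2*n := by omega
    exact_mod_cast this
  rw [sum_range_pair n (fun i => (pd (2*n) g i)^2)]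
  have key : ∀ j ∈ range n,
      (pd (2*n) g (2*j))^2 + (pd (2*n) g (2*j+1))^2 = (2 + 2*v)/(((2*n:ℕ):ℝ))^2 := by
    intro j hj
    have hj' := mem_range.mp hj
    rw [pd_even rfl g hj', pd_odd rfl g hj']
    rw [div_pow, div_pow, ← add_div]
    congr 1
    have := hg j hj'
    nlinarith [this]
  rw [Finset.sum_congr rfl key, Finset.sum_const, card_range, nsmul_eq_mul]
  have h2n : ((2*n:ℕ):ℝ) = 2*(n:ℝ) := by push_cast; ring
  rw [h2n]
  have hnR : (0:ℝ) < (n:ℝ) := by exact_mod_cast hn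
  field_simp

lemma pd_of_ge {d : ℕ} (g : ℕ → ℝ) {i : ℕ} (hi : d ≤ i) : pd d g i = 0 := by
  simp [pd, Nat.not_lt.mpr hi]

lemma pd_nonneg {d : ℕ} {g : ℕ → ℝ} (hg : ∀ j, |g j| ≤ 1) (i : ℕ) : 0 ≤ pd d g i := by
  unfold pd
  split
  · apply div_nonneg _ (by positivity)
    have := abs_le.mp (hg (i / 2))
    split <;> nlinarith [this.1, this.2]
  · exact le_rfl

lemma sum_pd {d n : ℕ} (hd : d = 2 * n) (hn : 0 < n) (g : ℕ → ℝ) :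
    ∑ i ∈ range d, pd d g i = 1 := by
  subst hd
  have hdne : ((2 * n : ℕ) : ℝ) ≠ 0 := by positivity
  rw [sum_range_pair]
  have : ∀ j ∈ range n, pd (2*n) g (2 * j) + pd (2*n) g (2 * j + 1) = 2 / ((2*n : ℕ) : ℝ) := by
    intro j hj
    rw [pd_even rfl g (mem_range.mp hj), pd_odd rfl g (mem_range.mp hj)]
    field_simp
    ring
  rw [Finset.sum_congr rfl this, Finset.sum_const, card_range]
  push_cast at hdne ⊢
  have hnne : (n:ℝ) ≠ 0 := Nat.cast_ne_zero.mpr (by omega)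
  field_simp
  ring_nf
  exact mul_inv_cancel₀ hnne

lemma pd_isProbOn {d n : ℕ} (hd : d = 2 * n) (hn : 0 < n) {g : ℕ → ℝ} (hg : ∀ j, |g j| ≤ 1) :
    IsProbOn d (pd d g) := by
  refine ⟨⟨pd_nonneg hg, ?_⟩, fun i hi => pd_of_ge g hi⟩
  rw [tsum_eq_sum (s := range d) (fun b hb => pd_of_ge g (by simpa using hb))]
  exact sum_pd hd hn g

lemma tv_pd_ge {d n : ℕ} (hd : d = 2 * n) (hn : 0 < n) (g g' : ℕ → ℝ) :
    (1 / d) * ∑ j ∈ range n, |g j - g' j| ≤ tvDist (pd d g) (pd d g') := by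
  subst hd
  set d := 2 * n with hd
  have hsupp : ∀ i ∉ range d, |pd d g i - pd d g' i| = 0 := by
    intro i hi
    rw [pd_of_ge g (by simpa using hi), pd_of_ge g' (by simpa using hi)]
    simp
  have hdpos : (0:ℝ) < (d:ℝ) := by
    have : 0 < d := by omega
    exact_mod_cast this
  unfold tvDist
  rw [tsum_eq_sum hsupp, sum_range_pair]
  rw [Finset.mul_sum, Finset.mul_sum]
  apply Finset.sum_le_sum
  intro j hj
  have hj' := mem_range.mp hj
  rw [pd_even rfl g hj', pd_even rfl g' hj', pd_odd rfl g hj', pd_odd rfl g' hj']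
  have e1 : (1 + g j) / (d:ℝ) - (1 + g' j) / d = (g j - g' j) / d := by ring
  have e2 : (1 - g j) / (d:ℝ) - (1 - g' j) / d = -((g j - g' j) / d) := by ring
  rw [e1, e2, abs_neg, abs_div, abs_of_pos hdpos]
  rw [← add_div]
  rw [div_mul_eq_mul_div, mul_comm, ← div_mul_eq_mul_div]
  ring_nf
  exact le_rfl


def piF (d m : ℕ) : Finset (Fin m → ℕ) := Fintype.piFinset fun _ => Finset.range d

lemma prod_eq_zero_of_not_mem {d m : ℕ} {μ : ℕ → ℝ} (hsupp : ∀ i, d ≤ i → μ i = 0)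
    {x : Fin m → ℕ} (hx : x ∉ piF d m) : ∏ t, μ (x t) = 0 := by
  simp only [piF, Fintype.mem_piFinset, mem_range] at hx
  push_neg at hx
  obtain ⟨t, ht⟩ := hx
  exact Finset.prod_eq_zero (mem_univ t) (hsupp _ ht)

lemma sum_prod_pow {d m : ℕ} (f : ℕ → ℝ) :
    ∑ x ∈ piF d m, ∏ t, f (x t) = (∑ a ∈ range d, f a) ^ m := by
  have h := Finset.prod_univ_sum (fun _ : Fin m => range d) (fun _ a => f a)
  rw [piF, ← h, Finset.prod_const, Finset.card_univ, Fintype.card_fin]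

lemma probOf_eq_sum {d m : ℕ} {μ : ℕ → ℝ} (hsupp : ∀ i, d ≤ i → μ i = 0) (A : Set (Fin m → ℕ)) :
    probOf μ m A = ∑ x ∈ piF d m, Set.indicator A (fun y => ∏ t, μ (y t)) x := by
  apply tsum_eq_sum
  intro x hx
  have := prod_eq_zero_of_not_mem hsupp hx
  classical
  rw [Set.indicator_apply]
  split <;> simp [this]

lemma probOf_nonneg {d m : ℕ} {μ : ℕ → ℝ} (hμ : IsProbOn d μ) (A : Set (Fin m → ℕ)) :
    0 ≤ probOf μ m A := by
  rw [probOf_eq_sum hμ.2 A]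
  apply Finset.sum_nonneg
  intro x _
  exact Set.indicator_nonneg (fun y _ => Finset.prod_nonneg (fun t _ => hμ.1.1 _)) x

lemma sum_mu_one {d : ℕ} {μ : ℕ → ℝ} (hμ : IsProbOn d μ) :
    ∑ a ∈ range d, μ a = 1 := by
  rw [← tsum_eq_sum (L := SummationFilter.unconditional ℕ) (s := range d) (fun b hb => hμ.2 b (by simpa using hb))]
  exact hμ.1.2

lemma probOf_le_one {d m : ℕ} {μ : ℕ → ℝ} (hμ : IsProbOn d μ) (A : Set (Fin m → ℕ)) :
    probOf μ m A ≤ 1 := by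
  rw [probOf_eq_sum hμ.2 A]
  calc ∑ x ∈ piF d m, Set.indicator A (fun y => ∏ t, μ (y t)) x
      ≤ ∑ x ∈ piF d m, ∏ t, μ (x t) := by
        apply Finset.sum_le_sum
        intro x _
        exact Set.indicator_le_self' (fun y _ => Finset.prod_nonneg (fun t _ => hμ.1.1 _)) x
    _ = (∑ a ∈ range d, μ a) ^ m := sum_prod_pow μ
    _ = 1 := by rw [sum_mu_one hμ]; simp

lemma probOf_err {d m : ℕ} {μ : ℕ → ℝ} (hμ : IsProbOn d μ) (ε : ℝ) (est : (Fin m → ℕ) → (ℕ → ℝ)) :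
    probOf μ m {x | ε < tvDist (est x) μ} =
      1 - ∑ x ∈ piF d m, Set.indicator {x | tvDist (est x) μ ≤ ε} (fun y => ∏ t, μ (y t)) x := by
  classical
  rw [probOf_eq_sum hμ.2]
  have key : ∀ x ∈ piF d m,
      Set.indicator {x | ε < tvDist (est x) μ} (fun y => ∏ t, μ (y t)) x
      = (∏ t, μ (x t)) - Set.indicator {x | tvDist (est x) μ ≤ ε} (fun y => ∏ t, μ (y t)) x := by
    intro x _
    simp only [Set.indicator_apply, Set.mem_setOf_eq]
    by_cases h : ε < tvDist (est x) μ
    · rw [if_pos h, if_neg (not_le.mpr h)]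
      simp
    · rw [if_neg h, if_pos (not_lt.mp h)]
      simp
  rw [Finset.sum_congr rfl key, Finset.sum_sub_distrib, sum_prod_pow μ, sum_mu_one hμ]
  simp

lemma bddAbove_S {d m : ℕ} (ε : ℝ) (est : (Fin m → ℕ) → (ℕ → ℝ)) :
    BddAbove {r : ℝ | ∃ μ : ℕ → ℝ, IsProbOn d μ ∧
      r = probOf μ m {x | ε < tvDist (est x) μ}} := by
  refine ⟨1, ?_⟩
  rintro r ⟨μ, hμ, rfl⟩
  exact probOf_le_one hμ _

lemma tv_triangle {d : ℕ} {ν μ μ' : ℕ → ℝ}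
    (hν : ∀ i, d ≤ i → ν i = 0) (hμ : ∀ i, d ≤ i → μ i = 0) (hμ' : ∀ i, d ≤ i → μ' i = 0) :
    tvDist μ μ' ≤ tvDist ν μ + tvDist ν μ' := by
  have h1 : ∀ b ∉ range d, |μ b - μ' b| = 0 := fun b hb => by
    have hb' : d ≤ b := by simpa using hb
    simp [hμ b hb', hμ' b hb']
  have h2 : ∀ b ∉ range d, |ν b - μ b| = 0 := fun b hb => by
    have hb' : d ≤ b := by simpa using hb
    simp [hν b hb', hμ b hb']
  have h3 : ∀ b ∉ range d, |ν b - μ' b| = 0 := fun b hb => by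
    have hb' : d ≤ b := by simpa using hb
    simp [hν b hb', hμ' b hb']
  unfold tvDist
  rw [tsum_eq_sum (s := range d) h1, tsum_eq_sum (s := range d) h2,
    tsum_eq_sum (s := range d) h3]
  rw [← mul_add, ← Finset.sum_add_distrib]
  apply mul_le_mul_of_nonneg_left _ (by norm_num)
  apply Finset.sum_le_sum
  intro i _
  calc |μ i - μ' i| = |(ν i - μ' i) - (ν i - μ i)| := by ring_nf
    _ ≤ |ν i - μ' i| + |ν i - μ i| := abs_sub _ _
    _ = |ν i - μ i| + |ν i - μ' i| := by ring


noncomputable def gA (τ : Finset ℕ) : ℕ → ℝ := fun j => if j ∈ τ then 1/2 else -(1/2)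

lemma gA_abs (τ : Finset ℕ) (j : ℕ) : |gA τ j| ≤ 1 := by
  unfold gA
  split
  · rw [abs_of_nonneg] <;> norm_num
  · rw [abs_of_nonpos] <;> norm_num

def Ux {m : ℕ} (n : ℕ) (x : Fin m → ℕ) : Finset ℕ :=
  (range n).filter (fun j => ∀ t, x t / 2 ≠ j)

lemma Ux_card {m n : ℕ} (x : Fin m → ℕ) : n - m ≤ (Ux n x).card := by
  classical
  have hsplit := Finset.card_filter_add_card_filter_not
    (s := range n) (p := fun j => ∀ t, x t / 2 ≠ j)
  have hc : ((range n).filter (fun j => ¬ ∀ t, x t / 2 ≠ j)).card ≤ m := by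
    have hsub : (range n).filter (fun j => ¬ ∀ t, x t / 2 ≠ j) ⊆
        Finset.image (fun t => x t / 2) univ := by
      intro j hj
      rw [mem_filter] at hj
      push_neg at hj
      obtain ⟨t, ht⟩ := hj.2
      exact Finset.mem_image.mpr ⟨t, mem_univ t, ht⟩
    calc ((range n).filter (fun j => ¬ ∀ t, x t / 2 ≠ j)).card
        ≤ (Finset.image (fun t => x t / 2) univ).card := Finset.card_le_card hsub
      _ ≤ (univ : Finset (Fin m)).card := Finset.card_image_le
      _ = m := by simp
  have : (Ux n x).card + ((range n).filter (fun j => ¬ ∀ t, x t / 2 ≠ j)).card = n := by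
    rw [Ux]
    simpa using hsplit
  omega

lemma gA_symmDiff_eq {τ U : Finset ℕ} {j : ℕ} (hj : j ∉ U) : gA (symmDiff τ U) j = gA τ j := by
  classical
  unfold gA
  have : j ∈ symmDiff τ U ↔ j ∈ τ := by
    rw [Finset.mem_symmDiff]
    constructor
    · rintro (⟨h1, _⟩ | ⟨h1, _⟩)
      · exact h1
      · exact absurd h1 hj
    · intro h; exact Or.inl ⟨h, hj⟩
  simp [this]

lemma gA_symmDiff_flip {τ U : Finset ℕ} {j : ℕ} (hj : j ∈ U) :
    |gA τ j - gA (symmDiff τ U) j| = 1 := by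
  classical
  have : (j ∈ symmDiff τ U) ↔ ¬ (j ∈ τ) := by
    rw [Finset.mem_symmDiff]
    constructor
    · rintro (⟨_, h2⟩ | ⟨_, h2⟩) h
      · exact h2 hj
      · exact h2 h
    · intro h; exact Or.inr ⟨hj, h⟩
  unfold gA
  by_cases hτ : j ∈ τ
  · rw [if_pos hτ, if_neg (by rw [this]; exact not_not_intro hτ)]
    norm_num
  · rw [if_neg hτ, if_pos (this.mpr hτ)]
    norm_num

theorem caseA {d n m : ℕ} (hd : d = 2*n) (hn : 0 < n) (hm : 2*m ≤ n) {ε : ℝ}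
    (hε : 0 < ε) (hε16 : ε < 1/16)
    (est : (Fin m → ℕ) → ℕ → ℝ) (hest : ∀ x, IsProbOn d (est x)) :
    ∃ μ : ℕ → ℝ, IsProbOn d μ ∧ 1/2 ≤ probOf μ m {x | ε < tvDist (est x) μ} := by
  classical
  set P : Finset (Finset ℕ) := (range n).powerset with hP
  have hdR : (0:ℝ) < (d:ℝ) := by
    have : 0 < d := by omega
    exact_mod_cast this
  -- success weight of τ
  set F : Finset ℕ → (Fin m → ℕ) → ℝ := fun τ x =>
    Set.indicator {x | tvDist (est x) (pd d (gA τ)) ≤ ε} (fun y => ∏ t, pd d (gA τ) (y t)) x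
    with hF
  -- separation: for any τ and x, the flipped code word is far
  have sep : ∀ (τ : Finset ℕ) (x : Fin m → ℕ), (1:ℝ)/4 ≤
      tvDist (pd d (gA τ)) (pd d (gA (symmDiff τ (Ux n x)))) := by
    intro τ x
    refine le_trans ?_ (tv_pd_ge hd hn _ _)
    have hsub : Ux n x ⊆ range n := Finset.filter_subset _ _
    have : (((Ux n x).card : ℝ)) ≤ ∑ j ∈ range n, |gA τ j - gA (symmDiff τ (Ux n x)) j| := by
      calc ((Ux n x).card : ℝ) = ∑ j ∈ Ux n x, (1:ℝ) := by simp
        _ = ∑ j ∈ Ux n x, |gA τ j - gA (symmDiff τ (Ux n x)) j| := by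
            apply Finset.sum_congr rfl
            intro j hj
            rw [gA_symmDiff_flip hj]
        _ ≤ ∑ j ∈ range n, |gA τ j - gA (symmDiff τ (Ux n x)) j| := by
            apply Finset.sum_le_sum_of_subset_of_nonneg hsub
            intro j _ _
            exact abs_nonneg _
    have hcard : ((n:ℝ) - m) ≤ ((Ux n x).card : ℝ) := by
      have h1 := Ux_card (n := n) x
      have hmn : m ≤ n := by omega
      have : ((n - m : ℕ) : ℝ) ≤ ((Ux n x).card : ℝ) := by exact_mod_cast h1
      rw [Nat.cast_sub hmn] at this
      exact this
    have hnm : (n:ℝ)/2 ≤ (n:ℝ) - m := by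
      have : (2*m : ℕ) ≤ n := hm
      have : ((2*m : ℕ) : ℝ) ≤ (n:ℝ) := by exact_mod_cast this
      push_cast at this
      linarith
    have hdn : (d:ℝ) = 2*n := by exact_mod_cast congrArg (Nat.cast : ℕ → ℝ) hd
    rw [div_mul_eq_mul_div, one_mul, le_div_iff₀ hdR]
    nlinarith [this, hcard, hnm]
  -- per-sample pairing bound
  have pairing : ∀ x : Fin m → ℕ,
      ∑ τ ∈ P, F τ x ≤ (1/2) * ∑ τ ∈ P, ∏ t, pd d (gA τ) (x t) := by
    intro x
    have hUsub : Ux n x ⊆ range n := Finset.filter_subset _ _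
    have hmem : ∀ τ ∈ P, symmDiff τ (Ux n x) ∈ P := by
      intro τ hτ
      rw [hP, mem_powerset] at hτ ⊢
      intro j hj
      rw [Finset.mem_symmDiff] at hj
      rcases hj with ⟨h1, _⟩ | ⟨h1, _⟩
      · exact hτ h1
      · exact hUsub h1
    have hinv : ∀ τ : Finset ℕ, symmDiff (symmDiff τ (Ux n x)) (Ux n x) = τ :=
      fun τ => symmDiff_symmDiff_cancel_right _ _
    have hflik : ∀ τ : Finset ℕ,
        (∏ t, pd d (gA (symmDiff τ (Ux n x))) (x t)) = ∏ t, pd d (gA τ) (x t) := by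
      intro τ
      apply Finset.prod_congr rfl
      intro t _
      apply pd_congr
      apply gA_symmDiff_eq
      intro hmemU
      rw [Ux, mem_filter] at hmemU
      exact hmemU.2 t rfl
    have hswap : ∑ τ ∈ P, F (symmDiff τ (Ux n x)) x = ∑ τ ∈ P, F τ x := by
      apply Finset.sum_bij' (i := fun τ (_ : τ ∈ P) => symmDiff τ (Ux n x))
        (j := fun τ (_ : τ ∈ P) => symmDiff τ (Ux n x))
        (hi := fun τ hτ => hmem τ hτ) (hj := fun τ hτ => hmem τ hτ)
      · intro τ hτ; exact hinv τ
      · intro τ hτ; exact hinv τ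
      · intro τ hτ; rfl
    have hterm : ∀ τ ∈ P, F τ x + F (symmDiff τ (Ux n x)) x ≤ ∏ t, pd d (gA τ) (x t) := by
      intro τ hτ
      have hprodnn : (0:ℝ) ≤ ∏ t, pd d (gA τ) (x t) :=
        Finset.prod_nonneg fun t _ => ((pd_isProbOn hd hn (gA_abs τ)).1.1 _)
      by_cases h1 : tvDist (est x) (pd d (gA τ)) ≤ ε
      · by_cases h2 : tvDist (est x) (pd d (gA (symmDiff τ (Ux n x)))) ≤ ε
        · exfalso
          have htri := tv_triangle (hest x).2 (pd_isProbOn hd hn (gA_abs τ)).2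
            (pd_isProbOn hd hn (gA_abs (symmDiff τ (Ux n x)))).2
          have := sep τ x
          linarith
        · have e1 : F τ x = ∏ t, pd d (gA τ) (x t) :=
            Set.indicator_of_mem (by simpa using h1) _
          have e2 : F (symmDiff τ (Ux n x)) x = 0 :=
            Set.indicator_of_notMem (by simpa using h2) _
          rw [e1, e2]; linarith
      · have e1 : F τ x = 0 := Set.indicator_of_notMem (by simpa using h1) _
        have e2 : F (symmDiff τ (Ux n x)) x ≤ ∏ t, pd d (gA τ) (x t) := by
          rw [← hflik τ]
          exact Set.indicator_le_self'
            (fun y _ => Finset.prod_nonneg fun t _ =>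
              ((pd_isProbOn hd hn (gA_abs _)).1.1 _)) x
        rw [e1]; linarith
    have h2sum : 2 * ∑ τ ∈ P, F τ x ≤ ∑ τ ∈ P, ∏ t, pd d (gA τ) (x t) := by
      have : ∑ τ ∈ P, (F τ x + F (symmDiff τ (Ux n x)) x) ≤
          ∑ τ ∈ P, ∏ t, pd d (gA τ) (x t) := Finset.sum_le_sum hterm
      rw [Finset.sum_add_distrib, hswap] at this
      linarith
    linarith
  -- total success mass
  have htotal : ∑ τ ∈ P, ∑ x ∈ piF d m, F τ x ≤ (2^n : ℝ) / 2 := by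
    rw [Finset.sum_comm]
    calc ∑ x ∈ piF d m, ∑ τ ∈ P, F τ x
        ≤ ∑ x ∈ piF d m, (1/2) * ∑ τ ∈ P, ∏ t, pd d (gA τ) (x t) :=
          Finset.sum_le_sum fun x _ => pairing x
      _ = (1/2) * ∑ τ ∈ P, ∑ x ∈ piF d m, ∏ t, pd d (gA τ) (x t) := by
          rw [← Finset.mul_sum, Finset.sum_comm]
      _ = (1/2) * ∑ τ ∈ P, (1:ℝ) := by
          congr 1
          apply Finset.sum_congr rfl
          intro τ _
          rw [sum_prod_pow, sum_pd hd hn, one_pow]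
      _ = (2^n : ℝ)/2 := by
          rw [Finset.sum_const, hP, card_powerset, card_range]
          push_cast
          ring
  have hPne : P.Nonempty := ⟨∅, by simp [hP]⟩
  have hex : ∃ τ ∈ P, ∑ x ∈ piF d m, F τ x ≤ 1/2 := by
    by_contra hcon
    push_neg at hcon
    have hlt := Finset.sum_lt_sum_of_nonempty hPne (f := fun _ => (1:ℝ)/2)
      (g := fun τ => ∑ x ∈ piF d m, F τ x) (fun τ hτ => hcon τ hτ)
    rw [Finset.sum_const, hP, card_powerset, card_range] at hlt
    have : ((2^n : ℕ) : ℝ) * (1/2) = (2^n : ℝ)/2 := by push_cast; ring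
    rw [nsmul_eq_mul, this] at hlt
    linarith
  obtain ⟨τ, _, hτle⟩ := hex
  refine ⟨pd d (gA τ), pd_isProbOn hd hn (gA_abs τ), ?_⟩
  rw [probOf_err (pd_isProbOn hd hn (gA_abs τ)) ε est]
  have : ∑ x ∈ piF d m, Set.indicator {x | tvDist (est x) (pd d (gA τ)) ≤ ε}
      (fun y => ∏ t, pd d (gA τ) (y t)) x = ∑ x ∈ piF d m, F τ x := rfl
  rw [this]
  linarith


/-- Gilbert–Varshamov style existence of a separated code. -/
lemma gv (n K : ℕ) : ∃ A : Finset (Finset ℕ),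
    (∀ τ ∈ A, τ ⊆ range n) ∧
    (∀ τ ∈ A, ∀ τ' ∈ A, τ ≠ τ' → K < (symmDiff τ τ').card) ∧
    2 ^ n ≤ A.card * ∑ j ∈ range (K + 1), Nat.choose n j := by
  classical
  set good : Finset (Finset ℕ) → Prop := fun A =>
    (∀ τ ∈ A, τ ⊆ range n) ∧ (∀ τ ∈ A, ∀ τ' ∈ A, τ ≠ τ' → K < (symmDiff τ τ').card)
    with hgood
  have hfin : {A | good A}.Finite := by
    apply Set.Finite.subset (Finset.finite_toSet ((range n).powerset.powerset))
    intro A hA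
    have : A ∈ (range n).powerset.powerset := by
      rw [Finset.mem_powerset]
      intro τ hτ
      exact Finset.mem_powerset.mpr (hA.1 τ hτ)
    exact Finset.mem_coe.mpr this
  have hne : {A | good A}.Nonempty := ⟨∅, by simp [hgood]⟩
  obtain ⟨A, hAgood, hAmax⟩ := Set.Finite.exists_maximalFor Finset.card _ hfin hne
  refine ⟨A, hAgood.1, hAgood.2, ?_⟩
  -- covering property
  have hcov : ∀ y ⊆ range n, ∃ c ∈ A, (symmDiff y c).card ≤ K := by
    intro y hy
    by_contra hcon
    push_neg at hcon
    have hyA : y ∉ A := by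
      intro hyA
      have := hcon y hyA
      simp at this
    have hgood' : good (insert y A) := by
      constructor
      · intro τ hτ
        rcases Finset.mem_insert.mp hτ with rfl | hτ
        · exact hy
        · exact hAgood.1 τ hτ
      · intro τ hτ τ' hτ' hne'
        rcases Finset.mem_insert.mp hτ with h1 | h1
        · rcases Finset.mem_insert.mp hτ' with h2 | h2
          · exact absurd (h1.trans h2.symm) hne'
          · subst h1
            exact hcon τ' h2
        · rcases Finset.mem_insert.mp hτ' with h2 | h2
          · subst h2
            simpa [symmDiff_comm] using hcon τ h1
          · exact hAgood.2 τ h1 τ' h2 hne'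
    have hcard := hAmax hgood' (Finset.card_le_card (Finset.subset_insert y A))
    rw [Finset.card_insert_of_notMem hyA] at hcard
    omega
  -- counting
  have hsub : (range n).powerset ⊆ A.biUnion
      (fun c => (range n).powerset.filter (fun y => (symmDiff y c).card ≤ K)) := by
    intro y hy
    obtain ⟨c, hc, hcK⟩ := hcov y (Finset.mem_powerset.mp hy)
    exact Finset.mem_biUnion.mpr ⟨c, hc, Finset.mem_filter.mpr ⟨hy, hcK⟩⟩
  have hball : ∀ c ∈ A, ((range n).powerset.filter (fun y => (symmDiff y c).card ≤ K)).card
      ≤ ∑ j ∈ range (K + 1), Nat.choose n j := by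
    intro c hc
    have hinj : ((range n).powerset.filter (fun y => (symmDiff y c).card ≤ K)).card ≤
        ((range (K+1)).biUnion (fun j => Finset.powersetCard j (range n))).card := by
      apply Finset.card_le_card_of_injOn (fun y => symmDiff y c)
      · intro y hy
        rw [Finset.mem_coe, Finset.mem_filter, Finset.mem_powerset] at hy
        rw [Finset.mem_coe]
        apply Finset.mem_biUnion.mpr
        refine ⟨(symmDiff y c).card, by simp [Nat.lt_succ_iff, hy.2], ?_⟩
        rw [Finset.mem_powersetCard]
        constructor
        · intro j hj
          rw [Finset.mem_symmDiff] at hj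
          rcases hj with ⟨h1, _⟩ | ⟨h1, _⟩
          · exact hy.1 h1
          · exact hAgood.1 c hc h1
        · rfl
      · intro y1 _ y2 _ h
        have := congrArg (fun z => symmDiff z c) h
        simpa [symmDiff_symmDiff_cancel_right] using this
    calc ((range n).powerset.filter (fun y => (symmDiff y c).card ≤ K)).card
        ≤ _ := hinj
      _ ≤ ∑ j ∈ range (K+1), (Finset.powersetCard j (range n)).card := Finset.card_biUnion_le
      _ = ∑ j ∈ range (K+1), Nat.choose n j := by
          apply Finset.sum_congr rfl
          intro j _
          rw [Finset.card_powersetCard, Finset.card_range]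
  calc 2^n = (range n).powerset.card := by rw [Finset.card_powerset, Finset.card_range]
    _ ≤ (A.biUnion (fun c => (range n).powerset.filter (fun y => (symmDiff y c).card ≤ K))).card :=
        Finset.card_le_card hsub
    _ ≤ ∑ c ∈ A, ((range n).powerset.filter (fun y => (symmDiff y c).card ≤ K)).card :=
        Finset.card_biUnion_le
    _ ≤ ∑ _c ∈ A, ∑ j ∈ range (K+1), Nat.choose n j := Finset.sum_le_sum hball
    _ = A.card * ∑ j ∈ range (K+1), Nat.choose n j := by rw [Finset.sum_const, smul_eq_mul]

/-- volume bound via binomial theorem -/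
lemma Vbound (n K : ℕ) :
    (∑ j ∈ range (K + 1), (Nat.choose n j : ℝ)) * ((1/65536)^K * (1 - 1/65536)^n) ≤ 1 := by
  set β : ℝ := 1/65536 with hβ
  have hβ0 : (0:ℝ) < β := by norm_num [hβ]
  have hβ1 : β < 1 := by norm_num [hβ]
  have h1β : (0:ℝ) < 1 - β := by norm_num [hβ]
  have step1 : (∑ j ∈ range (K + 1), (Nat.choose n j : ℝ)) * (β^K * (1-β)^n)
      ≤ ∑ j ∈ range (K + 1), (Nat.choose n j : ℝ) * (β^j * (1-β)^(n-j)) := by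
    rw [Finset.sum_mul]
    apply Finset.sum_le_sum
    intro j hj
    have hjK : j ≤ K := Nat.lt_succ_iff.mp (Finset.mem_range.mp hj)
    have h1 : β^K ≤ β^j := pow_le_pow_of_le_one hβ0.le hβ1.le hjK
    have h2 : (1-β)^n ≤ (1-β)^(n-j) := pow_le_pow_of_le_one h1β.le (by norm_num [hβ]) (Nat.sub_le n j)
    have := mul_le_mul h1 h2 (by positivity) (by positivity)
    have hc : (0:ℝ) ≤ (Nat.choose n j : ℝ) := Nat.cast_nonneg _
    exact mul_le_mul_of_nonneg_left this hc
  have step2 : ∑ j ∈ range (K + 1), (Nat.choose n j : ℝ) * (β^j * (1-β)^(n-j))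
      ≤ ∑ j ∈ range (K + n + 1), (Nat.choose n j : ℝ) * (β^j * (1-β)^(n-j)) := by
    apply Finset.sum_le_sum_of_subset_of_nonneg
    · apply Finset.range_subset_range.mpr; omega
    · intro j _ _; positivity
  have step3 : ∑ j ∈ range (K + n + 1), (Nat.choose n j : ℝ) * (β^j * (1-β)^(n-j))
      = ∑ j ∈ range (n + 1), (Nat.choose n j : ℝ) * (β^j * (1-β)^(n-j)) := by
    symm
    apply Finset.sum_subset (Finset.range_subset_range.mpr (by omega))
    intro j _ hj
    have hnj : n < j := by
      rw [Finset.mem_range] at hj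
      omega
    simp [Nat.choose_eq_zero_of_lt hnj]
  have step4 : ∑ j ∈ range (n + 1), (Nat.choose n j : ℝ) * (β^j * (1-β)^(n-j)) = 1 := by
    have hb := add_pow β (1-β) n
    have : β + (1 - β) = 1 := by ring
    rw [this, one_pow] at hb
    exact (Finset.sum_congr rfl fun j _ => by ring).trans hb.symm
  linarith


lemma expQuarter : Real.exp (1/4 : ℝ) ≤ 1.29 := by
  have h4 : (Real.exp (1/4 : ℝ))^4 = Real.exp 1 := by
    rw [← Real.exp_nat_mul]
    norm_num
  apply le_of_pow_le_pow_left₀ (n := 4) (by norm_num) (by norm_num)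
  rw [h4]
  calc Real.exp 1 ≤ 2.7182818286 := Real.exp_one_lt_d9.le
    _ ≤ 1.29^4 := by norm_num

lemma numeric_core {n K m M : ℕ} {δ V : ℝ} (hn8 : 8 ≤ n) (hδ2 : (m:ℝ) * δ^2 = n/4)
    (hδnn : 0 ≤ δ)
    (hnK : (2:ℝ)^20 * K ≤ (n:ℝ))
    (hMV : ((2:ℝ))^n ≤ (M:ℝ) * V)
    (hVb : V * ((1/65536)^K * (1 - 1/65536)^n) ≤ 1)
    (hVnn : 0 ≤ V) :
    (4:ℝ) * (1 + δ^2)^m ≤ M := by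
  set β : ℝ := 1/65536 with hβ
  have hβ0 : (0:ℝ) < β := by norm_num [hβ]
  have h1β : (0:ℝ) < 1 - β := by norm_num [hβ]
  -- a1 : (1+δ²)^m ≤ exp(1/4)^n
  have a1 : (1 + δ^2)^m ≤ Real.exp (1/4 : ℝ)^n := by
    have h1 : (1 + δ^2)^m ≤ Real.exp (δ^2)^m := by
      apply pow_le_pow_left₀ (by positivity)
      linarith [Real.add_one_le_exp (δ^2)]
    have h2 : Real.exp (δ^2)^m = Real.exp ((m:ℝ) * δ^2) := (Real.exp_nat_mul _ m).symm
    have h3 : Real.exp ((m:ℝ) * δ^2) = Real.exp (1/4 : ℝ)^n := by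
      rw [hδ2, ← Real.exp_nat_mul]
      norm_num
      ring_nf
    rw [h2, h3] at h1
    exact h1
  -- a2 : 2^(16*K) ≤ (1+β)^n
  have a2 : (2:ℝ)^(16*K) ≤ (1+β)^n := by
    have hL : 2^20 * K ≤ n := by
      have : ((2^20 * K : ℕ) : ℝ) ≤ (n:ℝ) := by push_cast; exact_mod_cast hnK
      exact_mod_cast this
    have h1 : ((1:ℝ)+β)^(2^20 * K) ≤ (1+β)^n :=
      pow_le_pow_right₀ (by norm_num [hβ]) hL
    have h2 : (2:ℝ)^(16*K) ≤ (1+β)^(2^20 * K) := by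
      have hb : (2:ℝ) ≤ (1+β)^(65536 : ℕ) := by
        have := one_add_mul_le_pow (a := β) (by norm_num [hβ]) 65536
        have he : (1:ℝ) + (65536:ℕ) * β = 2 := by norm_num [hβ]
        rw [he] at this
        exact this
      calc (2:ℝ)^(16*K) ≤ ((1+β)^(65536:ℕ))^(16*K) :=
            pow_le_pow_left₀ (by norm_num) hb _
        _ = (1+β)^(2^20 * K) := by
            rw [← pow_mul]
            congr 1
            norm_num
            ring
    exact h2.trans h1
  -- a3 : 2^n * β^K * (1-β)^n ≤ M
  have a3 : (2:ℝ)^n * β^K * (1-β)^n ≤ M := by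
    have h1 : (2:ℝ)^n * (β^K * (1-β)^n) ≤ ((M:ℝ) * V) * (β^K * (1-β)^n) :=
      mul_le_mul_of_nonneg_right hMV (by positivity)
    have h2 : ((M:ℝ) * V) * (β^K * (1-β)^n) = (M:ℝ) * (V * (β^K * (1-β)^n)) := by ring
    have h3 : (M:ℝ) * (V * (β^K * (1-β)^n)) ≤ (M:ℝ) * 1 := by
      apply mul_le_mul_of_nonneg_left _ (Nat.cast_nonneg _)
      exact hVb
    calc (2:ℝ)^n * β^K * (1-β)^n = (2:ℝ)^n * (β^K * (1-β)^n) := by ring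
      _ ≤ (M:ℝ) * (V * (β^K * (1-β)^n)) := h2 ▸ h1
      _ ≤ (M:ℝ) * 1 := h3
      _ = M := mul_one _
  -- a5 : 4 * exp(1/4)^n * 2^(16K) ≤ 2^n (1-β)^n
  have a5 : (4:ℝ) * Real.exp (1/4:ℝ)^n * (1+β)^n ≤ (2:ℝ)^n * (1-β)^n := by
    have e129 : Real.exp (1/4 : ℝ) ≤ 1.29 := expQuarter
    have l1 : Real.exp (1/4:ℝ)^n * (1+β)^n = (Real.exp (1/4:ℝ) * (1+β))^n := (mul_pow _ _ n).symm
    have l2 : Real.exp (1/4:ℝ) * (1+β) ≤ 1.2901 := by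
      calc Real.exp (1/4:ℝ) * (1+β) ≤ 1.29 * (1+β) := by
            apply mul_le_mul_of_nonneg_right e129 (by norm_num [hβ])
        _ ≤ 1.2901 := by norm_num [hβ]
      
    have l3 : (Real.exp (1/4:ℝ) * (1+β))^n ≤ (1.2901:ℝ)^n :=
      pow_le_pow_left₀ (by positivity) l2 n
    have l4 : (2:ℝ)^n * (1-β)^n = ((2:ℝ)*(1-β))^n := (mul_pow _ _ n).symm
    have l5 : (1.9999:ℝ) ≤ 2*(1-β) := by norm_num [hβ]
    have l6 : (4:ℝ) * (1.2901:ℝ)^n ≤ (1.9999:ℝ)^n := by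
      have q : (1.9999:ℝ) ≥ 1.55 * 1.2901 := by norm_num
      have h155 : (4:ℝ) ≤ (1.55:ℝ)^n := by
        calc (4:ℝ) ≤ (1.55:ℝ)^8 := by norm_num
          _ ≤ (1.55:ℝ)^n := pow_le_pow_right₀ (by norm_num) hn8
      calc (4:ℝ) * (1.2901:ℝ)^n ≤ (1.55:ℝ)^n * (1.2901:ℝ)^n := by
            apply mul_le_mul_of_nonneg_right h155 (by positivity)
        _ = (1.55 * 1.2901 : ℝ)^n := (mul_pow _ _ n).symm
        _ ≤ (1.9999:ℝ)^n := pow_le_pow_left₀ (by norm_num) (by norm_num) n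
      
    calc (4:ℝ) * Real.exp (1/4:ℝ)^n * (1+β)^n = 4 * (Real.exp (1/4:ℝ) * (1+β))^n := by
          rw [← l1]; ring
      _ ≤ 4 * (1.2901:ℝ)^n := by
          apply mul_le_mul_of_nonneg_left l3 (by norm_num)
      _ ≤ (1.9999:ℝ)^n := l6
      _ ≤ (2*(1-β))^n := pow_le_pow_left₀ (by norm_num) l5 n
      _ = (2:ℝ)^n * (1-β)^n := mul_pow _ _ n
  -- combine: 4(1+δ²)^m ≤ 2^n β^K (1-β)^n ≤ M
  have hββ : (2:ℝ)^(16*K) * β^K = 1 := by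
    rw [pow_mul]
    rw [← mul_pow]
    norm_num [hβ]
  have key : (4:ℝ) * (1 + δ^2)^m ≤ (2:ℝ)^n * β^K * (1-β)^n := by
    have h1 : (4:ℝ) * (1 + δ^2)^m * (2:ℝ)^(16*K) ≤ (4:ℝ) * Real.exp (1/4:ℝ)^n * (1+β)^n := by
      have := mul_le_mul (mul_le_mul_of_nonneg_left a1 (by norm_num : (0:ℝ) ≤ 4)) a2
        (by positivity) (by positivity)
      calc (4:ℝ) * (1 + δ^2)^m * (2:ℝ)^(16*K) = (4 * (1 + δ^2)^m) * (2:ℝ)^(16*K) := by ring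
        _ ≤ (4 * Real.exp (1/4:ℝ)^n) * (1+β)^n := this
        _ = (4:ℝ) * Real.exp (1/4:ℝ)^n * (1+β)^n := by ring
    have h2 : (4:ℝ) * (1 + δ^2)^m * (2:ℝ)^(16*K) ≤ (2:ℝ)^n * (1-β)^n := h1.trans a5
    have h3 := mul_le_mul_of_nonneg_right h2 (le_of_lt (pow_pos hβ0 K))
    calc (4:ℝ) * (1 + δ^2)^m
        = (4:ℝ) * (1 + δ^2)^m * ((2:ℝ)^(16*K) * β^K) := by rw [hββ]; ring
      _ = (4:ℝ) * (1 + δ^2)^m * (2:ℝ)^(16*K) * β^K := by ring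
      _ ≤ (2:ℝ)^n * (1-β)^n * β^K := h3
      _ = (2:ℝ)^n * β^K * (1-β)^n := by ring
  exact key.trans a3


lemma le_of_sq_le'' {a b : ℝ} (ha : 0 ≤ a) (hb : 0 ≤ b) (h : a^2 ≤ b^2) : a ≤ b :=
  (pow_le_pow_iff_left₀ ha hb (by norm_num)).mp h

theorem caseB {d n m : ℕ} (hd : d = 2*n) (hn8 : 8 ≤ n) (hm : n < 2*m) {ε : ℝ}
    (hε : 0 < ε) (hε16 : ε < 1/16) (hreg : (2:ℝ)^46 * m * ε^2 / d < 1)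
    (est : (Fin m → ℕ) → ℕ → ℝ) (hest : ∀ x, IsProbOn d (est x)) :
    ∃ μ : ℕ → ℝ, IsProbOn d μ ∧ 1/2 ≤ probOf μ m {x | ε < tvDist (est x) μ} := by
  classical
  have hn0 : 0 < n := by omega
  have hm0 : 0 < m := by omega
  have hdR : (0:ℝ) < (d:ℝ) := by
    have : 0 < d := by omega
    exact_mod_cast this
  have hdn : (d:ℝ) = 2 * n := by
    rw [hd]; push_cast; ring
  have hmR : (0:ℝ) < (m:ℝ) := by exact_mod_cast hm0
  have hnR : (0:ℝ) < (n:ℝ) := by exact_mod_cast hn0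
  set δ : ℝ := Real.sqrt ((n:ℝ)/(4*m)) with hδ
  have hδsq : δ^2 = (n:ℝ)/(4*m) := Real.sq_sqrt (by positivity)
  have hδpos : 0 < δ := Real.sqrt_pos.mpr (by positivity)
  have hδle1 : δ ≤ 1 := by
    have h1 : δ^2 ≤ 1 := by
      rw [hδsq, div_le_one (by positivity)]
      have : (n:ℝ) < 2*m := by exact_mod_cast hm
      linarith
    nlinarith [hδpos]
  have hmδ : (m:ℝ) * δ^2 = (n:ℝ)/4 := by
    rw [hδsq]
    field_simp
  set gB : Finset ℕ → ℕ → ℝ := fun τ j => if j ∈ τ then δ else -δ with hgB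
  have hgabs : ∀ τ : Finset ℕ, ∀ j, |gB τ j| ≤ 1 := by
    intro τ j
    rw [hgB]
    dsimp only
    split
    · rw [abs_of_pos hδpos]; exact hδle1
    · rw [abs_of_neg (by linarith)]; simpa using hδle1
  have hgsq : ∀ τ : Finset ℕ, ∀ j, j < n → (gB τ j)^2 = δ^2 := by
    intro τ j _
    rw [hgB]
    dsimp only
    split
    · rfl
    · ring
  set K : ℕ := ⌊ε * d / δ⌋₊ with hK
  obtain ⟨A, hA1, hA2, hA3⟩ := gv n K
  set M : ℕ := A.card with hM
  set V : ℝ := ∑ j ∈ range (K + 1), (Nat.choose n j : ℝ) with hV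
  have hVnn : 0 ≤ V := by positivity
  have hMV : ((2:ℝ))^n ≤ (M:ℝ) * V := by
    have := hA3
    have hcast : ((2^n : ℕ) : ℝ) ≤ ((A.card * ∑ j ∈ range (K + 1), Nat.choose n j : ℕ) : ℝ) := by
      exact_mod_cast this
    push_cast at hcast
    exact hcast
  -- bound on K
  have h46 : (2:ℝ)^46 * m * ε^2 < d := by
    rw [div_lt_one hdR] at hreg
    exact hreg
  have hnK : (2:ℝ)^20 * K ≤ (n:ℝ) := by
    have hKle : (K:ℝ) ≤ ε * d / δ := Nat.floor_le (by positivity)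
    have husq : (ε * d / δ)^2 = ε^2 * (d:ℝ)^2 * (4*m) / n := by
      rw [div_pow, hδsq]
      field_simp
    have hsq : ((2:ℝ)^20 * K)^2 ≤ (n:ℝ)^2 := by
      have h1 : ((2:ℝ)^20 * K)^2 ≤ ((2:ℝ)^20 * (ε*d/δ))^2 := by
        apply pow_le_pow_left₀ (by positivity)
        nlinarith [hKle]
      have h2 : ((2:ℝ)^20 * (ε*(d:ℝ)/δ))^2 = (2:ℝ)^40 * ((ε*(d:ℝ)/δ)^2) := by ring
      have h4 : (2:ℝ)^40 * (ε^2*(d:ℝ)^2*(4*(m:ℝ))/n) ≤ (n:ℝ)^2 := by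
        have he : (2:ℝ)^40 * (ε^2*(d:ℝ)^2*(4*(m:ℝ))/n) = (2:ℝ)^40*ε^2*(d:ℝ)^2*(4*(m:ℝ))/n := by
          ring
        rw [he, div_le_iff₀ hnR]
        have hd3 : (d:ℝ)^3 = 8*(n:ℝ)^3 := by rw [hdn]; ring
        calc (2:ℝ)^40*ε^2*(d:ℝ)^2*(4*(m:ℝ))
            = ((2:ℝ)^46*(m:ℝ)*ε^2) * ((d:ℝ)^2/16) := by ring
          _ ≤ (d:ℝ) * ((d:ℝ)^2/16) := mul_le_mul_of_nonneg_right h46.le (by positivity)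
          _ = (d:ℝ)^3/16 := by ring
          _ = (n:ℝ)^3/2 := by rw [hd3]; ring
          _ ≤ (n:ℝ)^2*(n:ℝ) := by nlinarith [pow_pos hnR 3]
      calc ((2:ℝ)^20 * K)^2 ≤ ((2:ℝ)^20 * (ε*(d:ℝ)/δ))^2 := h1
        _ = (2:ℝ)^40 * ((ε*(d:ℝ)/δ)^2) := h2
        _ = (2:ℝ)^40 * (ε^2*(d:ℝ)^2*(4*(m:ℝ))/n) := by rw [husq]
        _ ≤ (n:ℝ)^2 := h4
    have h20nn : (0:ℝ) ≤ (2:ℝ)^20 * K := by positivity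
    calc (2:ℝ)^20 * K = Real.sqrt (((2:ℝ)^20 * K)^2) := (Real.sqrt_sq h20nn).symm
      _ ≤ Real.sqrt ((n:ℝ)^2) := Real.sqrt_le_sqrt hsq
      _ = (n:ℝ) := Real.sqrt_sq hnR.le
  -- the key counting bound
  have hMbig : (4:ℝ) * (1 + δ^2)^m ≤ (M:ℝ) :=
    numeric_core hn8 hmδ hδpos.le hnK hMV (Vbound n K) hVnn
  -- separation of code words
  have sep : ∀ τ ∈ A, ∀ τ' ∈ A, τ ≠ τ' →
      2*ε < tvDist (pd d (gB τ)) (pd d (gB τ')) := by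
    intro τ hτ τ' hτ' hne
    have habs : ∀ j ∈ range n, |gB τ j - gB τ' j|
        = if j ∈ symmDiff τ τ' then 2*δ else 0 := by
      intro j _
      rw [hgB]
      dsimp only
      by_cases h1 : j ∈ τ <;> by_cases h2 : j ∈ τ'
      · rw [if_pos h1, if_pos h2, if_neg (by rw [Finset.mem_symmDiff]; tauto)]
        simp
      · rw [if_pos h1, if_neg h2, if_pos (by rw [Finset.mem_symmDiff]; tauto)]
        rw [sub_neg_eq_add, abs_of_pos (by linarith)]
        ring
      · rw [if_neg h1, if_pos h2, if_pos (by rw [Finset.mem_symmDiff]; tauto)]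
        rw [show -δ - δ = -(2*δ) by ring, abs_neg, abs_of_pos (by linarith)]
      · rw [if_neg h1, if_neg h2, if_neg (by rw [Finset.mem_symmDiff]; tauto)]
        simp
    have hsub : symmDiff τ τ' ⊆ range n := by
      intro j hj
      rw [Finset.mem_symmDiff] at hj
      rcases hj with ⟨h1, _⟩ | ⟨h1, _⟩
      · exact hA1 τ hτ h1
      · exact hA1 τ' hτ' h1
    have hsum : ∑ j ∈ range n, |gB τ j - gB τ' j| = 2*δ*((symmDiff τ τ').card) := by
      rw [Finset.sum_congr rfl habs, Finset.sum_ite_mem,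
        Finset.inter_eq_right.mpr hsub, Finset.sum_const, nsmul_eq_mul]
      ring
    have hKtv : ε * d / δ < ((symmDiff τ τ').card : ℝ) := by
      have h1 := hA2 τ hτ τ' hτ' hne
      have h2 : (ε * d / δ) < (K:ℝ) + 1 := Nat.lt_floor_add_one _
      have h3 : ((K:ℝ)) + 1 ≤ ((symmDiff τ τ').card : ℝ) := by
        have : K + 1 ≤ (symmDiff τ τ').card := h1
        exact_mod_cast this
      linarith
    have := tv_pd_ge hd hn0 (gB τ) (gB τ')
    rw [hsum] at this
    have hstep : 2*ε < (1/(d:ℝ)) * (2*δ*((symmDiff τ τ').card)) := by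
      have hc : ε * d < δ * ((symmDiff τ τ').card) := by
        rw [div_lt_iff₀ hδpos] at hKtv
        linarith [hKtv]
      rw [div_mul_eq_mul_div, one_mul, lt_div_iff₀ hdR]
      nlinarith [hc]
    linarith
  -- success indicators and likelihoods
  set Pl : Finset ℕ → (Fin m → ℕ) → ℝ := fun τ x => ∏ t, pd d (gB τ) (x t) with hPl
  set cs : Finset ℕ → (Fin m → ℕ) → ℝ := fun τ x =>
    if tvDist (est x) (pd d (gB τ)) ≤ ε then 1 else 0 with hcs
  have hPnn : ∀ τ x, 0 ≤ Pl τ x := fun τ x =>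
    Finset.prod_nonneg fun t _ => (pd_isProbOn hd hn0 (hgabs τ)).1.1 _
  have hcnn : ∀ τ x, 0 ≤ cs τ x := by
    intro τ x; rw [hcs]; dsimp only; split <;> norm_num
  have hdis : ∀ x : Fin m → ℕ, ∑ τ ∈ A, cs τ x ≤ 1 := by
    intro x
    have he : ∑ τ ∈ A, cs τ x
        = ((A.filter (fun τ => tvDist (est x) (pd d (gB τ)) ≤ ε)).card : ℝ) := by
      rw [hcs]
      dsimp only
      rw [Finset.sum_boole]
    rw [he]
    have hcard : (A.filter (fun τ => tvDist (est x) (pd d (gB τ)) ≤ ε)).card ≤ 1 := by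
      rw [Finset.card_le_one]
      intro τ1 h1 τ2 h2
      by_contra hne
      rw [Finset.mem_filter] at h1 h2
      have hsep := sep τ1 h1.1 τ2 h2.1 hne
      have htri := tv_triangle (hest x).2 (pd_isProbOn hd hn0 (hgabs τ1)).2
        (pd_isProbOn hd hn0 (hgabs τ2)).2
      linarith [h1.2, h2.2]
    exact_mod_cast hcard
  have perx : ∀ x : Fin m → ℕ,
      ∑ τ ∈ A, cs τ x * Pl τ x ≤ Real.sqrt (∑ τ ∈ A, (Pl τ x)^2) := by
    intro x
    have hcsq := Finset.sum_mul_sq_le_sq_mul_sq A (fun τ => cs τ x) (fun τ => Pl τ x)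
    have hc2 : ∑ τ ∈ A, (cs τ x)^2 = ∑ τ ∈ A, cs τ x := by
      apply Finset.sum_congr rfl
      intro τ _
      rw [hcs]; dsimp only; split <;> norm_num
    have hPsqnn : 0 ≤ ∑ τ ∈ A, (Pl τ x)^2 := Finset.sum_nonneg fun τ _ => sq_nonneg _
    have h1 : (∑ τ ∈ A, cs τ x * Pl τ x)^2 ≤ ∑ τ ∈ A, (Pl τ x)^2 := by
      calc (∑ τ ∈ A, cs τ x * Pl τ x)^2
          ≤ (∑ τ ∈ A, (cs τ x)^2) * ∑ τ ∈ A, (Pl τ x)^2 := hcsq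
        _ ≤ 1 * ∑ τ ∈ A, (Pl τ x)^2 := by
            apply mul_le_mul_of_nonneg_right _ hPsqnn
            rw [hc2]; exact hdis x
        _ = ∑ τ ∈ A, (Pl τ x)^2 := one_mul _
    exact (Real.le_sqrt (Finset.sum_nonneg fun τ _ => mul_nonneg (hcnn τ x) (hPnn τ x))
      hPsqnn).mpr h1
  set Q : (Fin m → ℕ) → ℝ := fun x => ∑ τ ∈ A, (Pl τ x)^2 with hQ
  have hQnn : ∀ x, 0 ≤ Q x := fun x => Finset.sum_nonneg fun τ _ => sq_nonneg _
  have hcardpi : ((piF d m).card : ℝ) = (d:ℝ)^m := by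
    have : (piF d m).card = d^m := by
      rw [piF, Fintype.card_piFinset]
      simp [Finset.card_range]
    rw [this]
    push_cast
    ring
  have hsum1 : ∑ _x ∈ piF d m, (1/(d:ℝ))^m = 1 := by
    rw [Finset.sum_const, nsmul_eq_mul, hcardpi, ← mul_pow]
    rw [mul_one_div, div_self hdR.ne']
    exact one_pow m
  have hsum2 : ∑ x ∈ piF d m, (d:ℝ)^m * Q x = (M:ℝ) * (1+δ^2)^m := by
    rw [← Finset.mul_sum, hQ]
    dsimp only
    rw [Finset.sum_comm]
    have hinner : ∀ τ ∈ A, ∑ x ∈ piF d m, (Pl τ x)^2 = ((1+δ^2)/d)^m := by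
      intro τ _
      have hsq : ∀ x : Fin m → ℕ, (Pl τ x)^2 = ∏ t, (fun a => (pd d (gB τ) a)^2) (x t) := by
        intro x
        rw [hPl]
        dsimp only
        rw [← Finset.prod_pow]
      calc ∑ x ∈ piF d m, (Pl τ x)^2
          = ∑ x ∈ piF d m, ∏ t, (fun a => (pd d (gB τ) a)^2) (x t) :=
            Finset.sum_congr rfl (fun x _ => hsq x)
        _ = (∑ a ∈ range d, (pd d (gB τ) a)^2)^m := sum_prod_pow (d := d) (m := m) (fun a => (pd d (gB τ) a)^2)
        _ = ((1+δ^2)/d)^m := by rw [sum_sq_pd hd hn0 (hgsq τ)]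
    rw [Finset.sum_congr rfl hinner, Finset.sum_const, nsmul_eq_mul]
    have hdd : (d:ℝ)^m * ((1+δ^2)/d)^m = (1+δ^2)^m := by
      rw [← mul_pow, mul_div_cancel₀ _ hdR.ne']
    calc (d:ℝ)^m * ((A.card:ℝ) * ((1+δ^2)/d)^m)
        = (A.card:ℝ) * ((d:ℝ)^m * ((1+δ^2)/d)^m) := by ring
      _ = (M:ℝ) * (1+δ^2)^m := by rw [hdd]
  have main : ∑ τ ∈ A, ∑ x ∈ piF d m, cs τ x * Pl τ x ≤ (M:ℝ)/2 := by
    rw [Finset.sum_comm]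
    have hsplit : ∀ x ∈ piF d m, Real.sqrt (Q x)
        = Real.sqrt ((1/(d:ℝ))^m) * Real.sqrt ((d:ℝ)^m * Q x) := by
      intro x _
      rw [← Real.sqrt_mul (by positivity)]
      congr 1
      rw [← mul_assoc, ← mul_pow, one_div, inv_mul_cancel₀ hdR.ne', one_pow, one_mul]
    have hcs2 : ∑ x ∈ piF d m, Real.sqrt (Q x) ≤
        Real.sqrt (∑ x ∈ piF d m, (1/(d:ℝ))^m) * Real.sqrt (∑ x ∈ piF d m, (d:ℝ)^m * Q x) := by
      rw [Finset.sum_congr rfl hsplit]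
      have hcs3 := Finset.sum_mul_sq_le_sq_mul_sq (piF d m)
        (fun x => Real.sqrt ((1/(d:ℝ))^m)) (fun x => Real.sqrt ((d:ℝ)^m * Q x))
      have hLnn : 0 ≤ ∑ x ∈ piF d m, Real.sqrt ((1/(d:ℝ))^m) * Real.sqrt ((d:ℝ)^m * Q x) :=
        Finset.sum_nonneg fun x _ => mul_nonneg (Real.sqrt_nonneg _) (Real.sqrt_nonneg _)
      have e1 : ∀ x ∈ piF d m, (Real.sqrt ((1/(d:ℝ))^m))^2 = (1/(d:ℝ))^m := fun x _ =>
        Real.sq_sqrt (by positivity)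
      have e2 : ∀ x ∈ piF d m, (Real.sqrt ((d:ℝ)^m * Q x))^2 = (d:ℝ)^m * Q x := fun x _ =>
        Real.sq_sqrt (mul_nonneg (by positivity) (hQnn x))
      rw [Finset.sum_congr rfl e1, Finset.sum_congr rfl e2] at hcs3
      have h2 : (∑ x ∈ piF d m, Real.sqrt ((1/(d:ℝ))^m) * Real.sqrt ((d:ℝ)^m * Q x))^2
          ≤ (Real.sqrt (∑ x ∈ piF d m, (1/(d:ℝ))^m) * Real.sqrt (∑ x ∈ piF d m, (d:ℝ)^m * Q x))^2 := by
        rw [mul_pow, Real.sq_sqrt (Finset.sum_nonneg fun x _ => by positivity),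
          Real.sq_sqrt (Finset.sum_nonneg fun x _ => mul_nonneg (by positivity) (hQnn x))]
        exact hcs3
      exact le_of_sq_le'' hLnn
        (mul_nonneg (Real.sqrt_nonneg _) (Real.sqrt_nonneg _)) h2
    calc ∑ x ∈ piF d m, ∑ τ ∈ A, cs τ x * Pl τ x
        ≤ ∑ x ∈ piF d m, Real.sqrt (Q x) := Finset.sum_le_sum fun x _ => perx x
      _ ≤ Real.sqrt (∑ _x ∈ piF d m, (1/(d:ℝ))^m) * Real.sqrt (∑ x ∈ piF d m, (d:ℝ)^m * Q x) := hcs2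
      _ = Real.sqrt ((M:ℝ) * (1+δ^2)^m) := by rw [hsum1, hsum2, Real.sqrt_one, one_mul]
      _ ≤ (M:ℝ)/2 := by
          have h1 : (M:ℝ)*(1+δ^2)^m ≤ (M:ℝ)*((M:ℝ)/4) := by
            apply mul_le_mul_of_nonneg_left _ (Nat.cast_nonneg M)
            linarith [hMbig]
          calc Real.sqrt ((M:ℝ) * (1+δ^2)^m) ≤ Real.sqrt ((M:ℝ)*((M:ℝ)/4)) :=
                Real.sqrt_le_sqrt h1
            _ = (M:ℝ)/2 := by
                rw [show (M:ℝ)*((M:ℝ)/4) = ((M:ℝ)/2)^2 by ring,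
                  Real.sqrt_sq (by positivity)]
  have hMpos : 0 < M := by
    rcases Nat.eq_zero_or_pos M with h0 | h
    · exfalso
      rw [h0] at hMbig
      push_cast at hMbig
      nlinarith [pow_pos (show (0:ℝ) < 1 + δ^2 by positivity) m]
    · exact h
  have hAne : A.Nonempty := Finset.card_pos.mp hMpos
  have hex : ∃ τ ∈ A, ∑ x ∈ piF d m, cs τ x * Pl τ x ≤ 1/2 := by
    by_contra hcon
    push_neg at hcon
    have hlt := Finset.sum_lt_sum_of_nonempty hAne (f := fun _ => (1:ℝ)/2)
      (g := fun τ => ∑ x ∈ piF d m, cs τ x * Pl τ x) hcon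
    rw [Finset.sum_const, nsmul_eq_mul] at hlt
    have : ((A.card:ℝ)) * (1/2) = (M:ℝ)/2 := by rw [hM]; ring
    rw [this] at hlt
    linarith [main]
  obtain ⟨τ, hτA, hτle⟩ := hex
  refine ⟨pd d (gB τ), pd_isProbOn hd hn0 (hgabs τ), ?_⟩
  rw [probOf_err (pd_isProbOn hd hn0 (hgabs τ)) ε est]
  have hind : ∑ x ∈ piF d m, Set.indicator {x | tvDist (est x) (pd d (gB τ)) ≤ ε}
      (fun y => ∏ t, pd d (gB τ) (y t)) x = ∑ x ∈ piF d m, cs τ x * Pl τ x := by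
    apply Finset.sum_congr rfl
    intro x _
    rw [Set.indicator_apply, hcs, hPl]
    dsimp only
    simp only [Set.mem_setOf_eq]
    split
    · rw [one_mul]
    · rw [zero_mul]
  rw [hind]
  linarith


end MXA
end MinimaxAux

/-- there is a universal constant `C > 0` such that for every even
`d ≥ 16`, every `m`, and every `ε ∈ (0, 1/16)`, and every estimator with values in `Δ_d`,
`sup_{μ ∈ Δ_d} P(‖μ̄(X) - μ‖_TV > ε) ≥ (1/2)(1 - C m ε²/d)`;
hence the same lower bound for the minimax risk. -/
theorem minimax_lower_tsybakov :
    ∃ C > (0 : ℝ), ∀ d : ℕ, Even d → 16 ≤ d → ∀ m : ℕ, 0 < m →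
      ∀ ε : ℝ, 0 < ε → ε < 1 / 16 →
        ∀ est : (Fin m → ℕ) → (ℕ → ℝ), (∀ x, IsProbOn d (est x)) →
          (1 / 2) * (1 - C * m * ε ^ 2 / d) ≤
            sSup {r : ℝ | ∃ μ : ℕ → ℝ, IsProbOn d μ ∧
              r = probOf μ m {x | ε < tvDist (est x) μ}} := by
  classical
  refine ⟨(2:ℝ)^46, by positivity, ?_⟩
  intro d hdEven hd16 m hm ε hε hε16 est hest
  obtain ⟨r, hr⟩ := hdEven
  have hd2 : d = 2 * r := by omega
  have hn8 : 8 ≤ r := by omega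
  have hdR : (0:ℝ) < (d:ℝ) := by
    have : 0 < d := by omega
    exact_mod_cast this
  by_cases hreg : (2:ℝ)^46 * m * ε^2 / d < 1
  · have hμex : ∃ μ : ℕ → ℝ, IsProbOn d μ ∧
        1/2 ≤ probOf μ m {x | ε < tvDist (est x) μ} := by
      rcases le_or_gt (2*m) r with hc | hc
      · exact MXA.caseA hd2 (by omega) hc hε hε16 est hest
      · exact MXA.caseB hd2 hn8 hc hε hε16 hreg est hest
    obtain ⟨μ, hμ, hle⟩ := hμex
    have hmem : probOf μ m {x | ε < tvDist (est x) μ} ∈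
        {r : ℝ | ∃ μ : ℕ → ℝ, IsProbOn d μ ∧
          r = probOf μ m {x | ε < tvDist (est x) μ}} := ⟨μ, hμ, rfl⟩
    have hsup := le_csSup (MXA.bddAbove_S ε est) hmem
    have hz : 0 ≤ (2:ℝ)^46 * m * ε^2 / d := by positivity
    calc (1/2 : ℝ) * (1 - (2:ℝ)^46 * m * ε^2 / d) ≤ 1/2 := by nlinarith
      _ ≤ _ := hle.trans hsup
  · push_neg at hreg
    have hμ : IsProbOn d (MXA.pd d (fun _ => 0)) :=
      MXA.pd_isProbOn hd2 (by omega) (fun j => by norm_num)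
    have hmem : probOf (MXA.pd d fun _ => 0) m
        {x | ε < tvDist (est x) (MXA.pd d fun _ => 0)} ∈
        {r : ℝ | ∃ μ : ℕ → ℝ, IsProbOn d μ ∧
          r = probOf μ m {x | ε < tvDist (est x) μ}} := ⟨_, hμ, rfl⟩
    have hsup := le_csSup (MXA.bddAbove_S ε est) hmem
    have h0 := MXA.probOf_nonneg hμ {x | ε < tvDist (est x) (MXA.pd d fun _ => 0)}
    calc (1/2 : ℝ) * (1 - (2:ℝ)^46 * m * ε^2 / d) ≤ 0 := by nlinarith
      _ ≤ _ := h0.trans hsup
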